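/- Construction of local alternatives (Proposition on perturbed couplings, part (i)): Let π_0 be a Borel probability measure on ℝ^d × ℝ^d with marginals μ_0 ≠ ν_0, such that μ_0⊗ν_0 ≪ π_0, ν_0⊗μ_0 ≪ π_0, ‖d(ν_0⊗μ_0)/dπ_0‖_∞ < ∞, and, for a fixed constant c̄ > 0, the function h := c̄·(d(μ_0⊗ν_0)/dπ_0 − d(ν_0⊗μ_0)/dπ_0) satisfies ‖h‖_{L²(π_0)} < ∞. For each n, if 1 + n^{−1/2}h ≥ 0 π_0-a.s., let π_n be the measure with dπ_n/dπ_0 = 1 + n^{−1/2}h; otherwise set π_n = π_0. Then: (a) each π_n is a probability measure; (b) ∫ h dπ_0 = 0; (c) n·H²(π_n,π_0) → (1/4)‖h‖²_{L²(π_0)} as n → ∞; and (d) for every σ > 0, every x ∈ ℝ^d and every n with 1 + n^{−1/2}h ≥ 0 π_0-a.s., the marginals μ_n, ν_n of π_n satisfy n^{1/2}((μ_n*φ_σ)(x) − (μ_0*φ_σ)(x)) = E_{π_0}[h(X,Y)·φ_σ(x−X)] = c̄·((μ_0*φ_σ)(x) − (ν_0*φ_σ)(x)) and n^{1/2}((ν_n*φ_σ)(x)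 − (ν_0*φ_σ)(x)) = E_{π_0}[h(X,Y)·φ_σ(x−Y)] = c̄·((ν_0*φ_σ)(x) − (μ_0*φ_σ)(x)). -/

import Mathlib

open MeasureTheory Filter Topology
open scoped ENNReal

noncomputable section

/-- The density of the centered isotropic Gaussian `N(0, σ² I_d)` on `ℝ^d`. -/
def gaussDensity (d : ℕ) (σ : ℝ) (x : EuclideanSpace ℝ (Fin d)) : ℝ :=
  (2 * Real.pi * σ ^ 2) ^ (-(d : ℝ) / 2) * Real.exp (-‖x‖ ^ 2 / (2 * σ ^ 2))

/-- The Lebesgue density of `m * γ_σ`: `(m*φ_σ)(x) = ∫ φ_σ(x−y) dm(y)`. -/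
def smoothDensity (d : ℕ) (σ : ℝ) (m : Measure (EuclideanSpace ℝ (Fin d)))
    (x : EuclideanSpace ℝ (Fin d)) : ℝ :=
  ∫ y, gaussDensity d σ (x - y) ∂m

lemma aux_sq_le (t : ℝ) : (Real.sqrt (1 + t) - 1) ^ 2 ≤ t ^ 2 := by
  rcases le_or_gt 0 (1 + t) with hp | hn
  · have hs := Real.sq_sqrt hp
    have h0 := Real.sqrt_nonneg (1 + t)
    nlinarith [sq_nonneg (Real.sqrt (1 + t) - 1), sq_nonneg (Real.sqrt (1 + t) + 1),
      mul_nonneg (sq_nonneg (Real.sqrt (1 + t) - 1)) h0]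
  · rw [Real.sqrt_eq_zero_of_nonpos hn.le]
    nlinarith

lemma aux_bound (n : ℕ) (y : ℝ) :
    |(n : ℝ) * (Real.sqrt (1 + (Real.sqrt n)⁻¹ * y) - 1) ^ 2| ≤ y ^ 2 := by
  rcases Nat.eq_zero_or_pos n with rfl | hn
  · simp
    positivity
  · have hn0 : (0 : ℝ) < n := by exact_mod_cast hn
    have key := aux_sq_le ((Real.sqrt n)⁻¹ * y)
    rw [abs_of_nonneg (by positivity)]
    have hsq : ((Real.sqrt n)⁻¹) ^ 2 = ((n : ℝ))⁻¹ := by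
      rw [inv_pow, Real.sq_sqrt hn0.le]
    calc (n : ℝ) * (Real.sqrt (1 + (Real.sqrt n)⁻¹ * y) - 1) ^ 2
        ≤ (n : ℝ) * ((Real.sqrt n)⁻¹ * y) ^ 2 := by
          exact mul_le_mul_of_nonneg_left key hn0.le
      _ = y ^ 2 := by rw [mul_pow, hsq]; field_simp

lemma aux_tendsto (y : ℝ) :
    Tendsto (fun n : ℕ => (n : ℝ) * (Real.sqrt (1 + (Real.sqrt n)⁻¹ * y) - 1) ^ 2)
      atTop (𝓝 ((y / 2) ^ 2)) := by
  have hinv : Tendsto (fun n : ℕ => (Real.sqrt n)⁻¹) atTop (𝓝 0) := by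
    have h1 : Tendsto (fun n : ℕ => ((n : ℝ))⁻¹) atTop (𝓝 0) :=
      tendsto_inv_atTop_zero.comp tendsto_natCast_atTop_atTop
    have h2 := (Real.continuous_sqrt.tendsto 0).comp h1
    simpa [Function.comp_def, Real.sqrt_inv] using h2
  have hy : Tendsto (fun n : ℕ => (Real.sqrt n)⁻¹ * y) atTop (𝓝 0) := by
    simpa using hinv.mul_const y
  have hden : Tendsto (fun n : ℕ => y / (Real.sqrt (1 + (Real.sqrt n)⁻¹ * y) + 1))
      atTop (𝓝 (y / 2)) := by
    have hc : ContinuousAt (fun u : ℝ => y / (Real.sqrt (1 + u) + 1)) 0 := by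
      apply ContinuousAt.div continuousAt_const
      · exact ((Real.continuous_sqrt.comp (continuous_const.add continuous_id)).continuousAt).add
          continuousAt_const
      · norm_num
    have := hc.tendsto.comp hy
    norm_num [Function.comp_def] at this
    exact this
  have hsq : Tendsto (fun n : ℕ => (y / (Real.sqrt (1 + (Real.sqrt n)⁻¹ * y) + 1)) ^ 2)
      atTop (𝓝 ((y / 2) ^ 2)) := hden.pow 2
  apply hsq.congr'
  filter_upwards [eventually_gt_atTop (⌈y ^ 2⌉₊)] with n hn
  have hn1 : 1 ≤ n := by omega
  have hn0 : (0 : ℝ) < n := by exact_mod_cast hn1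
  have hns : y ^ 2 < (n : ℝ) := lt_of_le_of_lt (Nat.le_ceil _) (by exact_mod_cast hn)
  set s := Real.sqrt n with hs
  have hs0 : 0 < s := Real.sqrt_pos.2 hn0
  have hss : s ^ 2 = (n : ℝ) := Real.sq_sqrt hn0.le
  have hys : |y| < s := by nlinarith [sq_abs y, abs_nonneg y]
  have hpos : 0 ≤ 1 + s⁻¹ * y := by
    have h1 : |s⁻¹ * y| < 1 := by
      rw [abs_mul, abs_inv, abs_of_pos hs0, ← div_eq_inv_mul]
      exact (div_lt_one hs0).2 hys
    linarith [neg_abs_le (s⁻¹ * y)]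
  have hq := Real.sq_sqrt hpos
  set t := Real.sqrt (1 + s⁻¹ * y) with ht
  have ht0 : 0 ≤ t := Real.sqrt_nonneg _
  have hden0 : (0 : ℝ) < t + 1 := by linarith
  rw [div_pow, div_eq_iff (by positivity : ((t + 1) ^ 2 : ℝ) ≠ 0)]
  have e2 : (t - 1) * (t + 1) = s⁻¹ * y := by nlinarith [hq]
  have e1 : (n : ℝ) * (t - 1) ^ 2 * (t + 1) ^ 2 = (s * ((t - 1) * (t + 1))) ^ 2 := by
    rw [← hss]; ring
  rw [e1, e2, mul_inv_cancel_left₀ hs0.ne']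

/-- Construction of local alternatives: the perturbed couplings
`dπₙ/dπ₀ = 1 + n^{−1/2} h` (when nonnegative a.s., and `πₙ = π₀` otherwise) are probability
measures, `∫ h dπ₀ = 0`, `n H²(πₙ,π₀) → (1/4)‖h‖²`, and the smoothed marginals satisfy the
stated perturbation identities. -/
theorem perturbed_coupling_construction
    (d : ℕ)
    (π₀ : Measure (EuclideanSpace ℝ (Fin d) × EuclideanSpace ℝ (Fin d)))
    [IsProbabilityMeasure π₀]
    -- the marginals μ₀ and ν₀ of π₀, with μ₀ ≠ ν₀
    (μ₀ ν₀ : Measure (EuclideanSpace ℝ (Fin d)))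
    (hμ₀ : μ₀ = π₀.map Prod.fst) (hν₀ : ν₀ = π₀.map Prod.snd) (hne : μ₀ ≠ ν₀)
    -- μ₀⊗ν₀ ≪ π₀ and ν₀⊗μ₀ ≪ π₀, with ‖d(ν₀⊗μ₀)/dπ₀‖_∞ < ∞
    (hac₁ : μ₀.prod ν₀ ≪ π₀) (hac₂ : ν₀.prod μ₀ ≪ π₀)
    (hbdd : ∃ C : ℝ≥0∞, C < ⊤ ∧ ∀ᵐ z ∂π₀, (ν₀.prod μ₀).rnDeriv π₀ z ≤ C)
    -- the perturbation h = c̄ (d(μ₀⊗ν₀)/dπ₀ − d(ν₀⊗μ₀)/dπ₀), with ‖h‖_{L²(π₀)} < ∞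
    (c : ℝ) (hc : 0 < c)
    (h : EuclideanSpace ℝ (Fin d) × EuclideanSpace ℝ (Fin d) → ℝ)
    (hdef : ∀ z, h z = c * (((μ₀.prod ν₀).rnDeriv π₀ z).toReal -
      ((ν₀.prod μ₀).rnDeriv π₀ z).toReal))
    (hL2 : MemLp h 2 π₀)
    -- the perturbed couplings πₙ
    (π : ℕ → Measure (EuclideanSpace ℝ (Fin d) × EuclideanSpace ℝ (Fin d)))
    (hπ : ∀ n : ℕ,
      ((∀ᵐ z ∂π₀, 0 ≤ 1 + (Real.sqrt n)⁻¹ * h z) →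
        π n = π₀.withDensity (fun z => ENNReal.ofReal (1 + (Real.sqrt n)⁻¹ * h z))) ∧
      ((¬ ∀ᵐ z ∂π₀, 0 ≤ 1 + (Real.sqrt n)⁻¹ * h z) → π n = π₀)) :
    -- (a) each πₙ is a probability measure
    (∀ n, IsProbabilityMeasure (π n))
    ∧
    -- (b) ∫ h dπ₀ = 0
    (∫ z, h z ∂π₀ = 0)
    ∧
    -- (c) n H²(πₙ,π₀) → (1/4)‖h‖²_{L²(π₀)}
    (Tendsto (fun n : ℕ => (n : ℝ) *
        ∫ z, (Real.sqrt (((π n).rnDeriv π₀ z).toReal) - 1) ^ 2 ∂π₀)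
      atTop (𝓝 ((1 / 4) * ∫ z, (h z) ^ 2 ∂π₀)))
    ∧
    -- (d) the perturbation identities for the smoothed marginals
    (∀ σ : ℝ, 0 < σ → ∀ x : EuclideanSpace ℝ (Fin d), ∀ n : ℕ, 1 ≤ n →
      (∀ᵐ z ∂π₀, 0 ≤ 1 + (Real.sqrt n)⁻¹ * h z) →
      (Real.sqrt n * (smoothDensity d σ ((π n).map Prod.fst) x - smoothDensity d σ μ₀ x)
          = ∫ z, h z * gaussDensity d σ (x - z.1) ∂π₀ ∧
        (∫ z, h z * gaussDensity d σ (x - z.1) ∂π₀)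
          = c * (smoothDensity d σ μ₀ x - smoothDensity d σ ν₀ x)) ∧
      (Real.sqrt n * (smoothDensity d σ ((π n).map Prod.snd) x - smoothDensity d σ ν₀ x)
          = ∫ z, h z * gaussDensity d σ (x - z.2) ∂π₀ ∧
        (∫ z, h z * gaussDensity d σ (x - z.2) ∂π₀)
          = c * (smoothDensity d σ ν₀ x - smoothDensity d σ μ₀ x))) := by
  have hμ₀p : IsProbabilityMeasure μ₀ := by
    rw [hμ₀]; exact Measure.isProbabilityMeasure_map measurable_fst.aemeasurable
  have hν₀p : IsProbabilityMeasure ν₀ := by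
    rw [hν₀]; exact Measure.isProbabilityMeasure_map measurable_snd.aemeasurable
  set A : _ → ℝ := fun z => ((μ₀.prod ν₀).rnDeriv π₀ z).toReal with hA
  set B : _ → ℝ := fun z => ((ν₀.prod μ₀).rnDeriv π₀ z).toReal with hB
  have hAm : Measurable A := (Measure.measurable_rnDeriv _ _).ennreal_toReal
  have hBm : Measurable B := (Measure.measurable_rnDeriv _ _).ennreal_toReal
  have hheq : h = fun z => c * (A z - B z) := funext hdef
  have hhm : Measurable h := by rw [hheq]; exact (hAm.sub hBm).const_mul c
  have hintA : Integrable A π₀ := Measure.integrable_toReal_rnDeriv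
  have hintB : Integrable B π₀ := Measure.integrable_toReal_rnDeriv
  have hinth : Integrable h π₀ := by rw [hheq]; exact (hintA.sub hintB).const_mul c
  have hb : ∫ z, h z ∂π₀ = 0 := by
    rw [hheq, integral_const_mul, integral_sub hintA hintB,
      Measure.integral_toReal_rnDeriv hac₁, Measure.integral_toReal_rnDeriv hac₂]
    simp
  have parta : ∀ n, IsProbabilityMeasure (π n) := by
    intro n
    by_cases hcond : ∀ᵐ z ∂π₀, 0 ≤ 1 + (Real.sqrt n)⁻¹ * h z
    · rw [(hπ n).1 hcond]
      constructor
      have hint1 : Integrable (fun z => 1 + (Real.sqrt n)⁻¹ * h z) π₀ :=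
        (integrable_const 1).add (hinth.const_mul _)
      rw [withDensity_apply _ MeasurableSet.univ, setLIntegral_univ,
        ← ofReal_integral_eq_lintegral_ofReal hint1 hcond,
        integral_add (integrable_const 1) (hinth.const_mul _), integral_const_mul, hb]
      simp
    · rw [(hπ n).2 hcond]; infer_instance
  refine ⟨parta, hb, ?_, ?_⟩
  · -- (c)
    obtain ⟨C, hC, hCb⟩ := hbdd
    set M : ℝ := c * C.toReal with hM
    have hM0 : 0 ≤ M := mul_nonneg hc.le ENNReal.toReal_nonneg
    have hlb : ∀ᵐ z ∂π₀, -M ≤ h z := by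
      filter_upwards [hCb] with z hz
      have h1 : B z ≤ C.toReal := ENNReal.toReal_mono hC.ne hz
      have h2 : 0 ≤ A z := ENNReal.toReal_nonneg
      rw [hdef z]
      nlinarith [hc.le]
    have hcond : ∀ n : ℕ, ⌈M ^ 2⌉₊ + 1 ≤ n → ∀ᵐ z ∂π₀, 0 ≤ 1 + (Real.sqrt n)⁻¹ * h z := by
      intro n hn
      have hn1 : 1 ≤ n := le_trans (by omega) hn
      have hn0 : (0 : ℝ) < n := by exact_mod_cast hn1
      have hs0 : 0 < Real.sqrt n := Real.sqrt_pos.2 hn0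
      have hMs : M ≤ Real.sqrt n := by
        rw [show M = Real.sqrt (M ^ 2) from (Real.sqrt_sq hM0).symm]
        apply Real.sqrt_le_sqrt
        calc M ^ 2 ≤ (⌈M ^ 2⌉₊ : ℝ) := Nat.le_ceil _
          _ ≤ (n : ℝ) := by exact_mod_cast le_trans (by omega) hn
      filter_upwards [hlb] with z hz
      have h1 : M * (Real.sqrt n)⁻¹ ≤ 1 := by
        rw [← div_eq_mul_inv]; exact div_le_one_of_le₀ hMs hs0.le
      have h2 : (Real.sqrt n)⁻¹ * (-M) ≤ (Real.sqrt n)⁻¹ * h z :=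
        mul_le_mul_of_nonneg_left hz (inv_nonneg.2 hs0.le)
      nlinarith
    have hDCT : Tendsto
        (fun n : ℕ => ∫ z, (n : ℝ) * (Real.sqrt (1 + (Real.sqrt n)⁻¹ * h z) - 1) ^ 2 ∂π₀)
        atTop (𝓝 (∫ z, (h z / 2) ^ 2 ∂π₀)) := by
      apply tendsto_integral_of_dominated_convergence (fun z => (h z) ^ 2)
      · intro n
        exact ((((Real.continuous_sqrt.measurable.comp
          (measurable_const.add (hhm.const_mul _))).sub measurable_const).pow_const 2).const_mul
          _).aestronglyMeasurable
      · exact hL2.integrable_sq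
      · intro n
        exact Eventually.of_forall fun z => by
          rw [Real.norm_eq_abs]; exact aux_bound n (h z)
      · exact Eventually.of_forall fun z => aux_tendsto (h z)
    have hval : ∫ z, (h z / 2) ^ 2 ∂π₀ = (1 / 4) * ∫ z, h z ^ 2 ∂π₀ := by
      rw [← integral_const_mul]
      congr 1; funext z; ring
    rw [hval] at hDCT
    apply hDCT.congr'
    filter_upwards [eventually_ge_atTop (⌈M ^ 2⌉₊ + 1)] with n hn
    have hcn := hcond n hn
    have hfm : Measurable fun z => ENNReal.ofReal (1 + (Real.sqrt n)⁻¹ * h z) :=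
      (measurable_const.add (hhm.const_mul _)).ennreal_ofReal
    have hrd := Measure.rnDeriv_withDensity π₀ hfm
    have heqi : ∫ z, (Real.sqrt ((((π₀.withDensity fun z =>
          ENNReal.ofReal (1 + (Real.sqrt n)⁻¹ * h z)).rnDeriv π₀) z).toReal) - 1) ^ 2 ∂π₀
        = ∫ z, (Real.sqrt (1 + (Real.sqrt n)⁻¹ * h z) - 1) ^ 2 ∂π₀ := by
      apply integral_congr_ae
      filter_upwards [hrd, hcn] with z h1 h2
      rw [h1, ENNReal.toReal_ofReal h2]
    rw [integral_const_mul, (hπ n).1 hcn, heqi]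
  · -- (d)
    intro σ hσ x n hn1 hcn
    have hgc : Continuous (gaussDensity d σ) := by
      unfold gaussDensity
      exact continuous_const.mul (Real.continuous_exp.comp
        (((continuous_norm.pow 2).neg).div_const _))
    have h2pi : (0 : ℝ) < 2 * Real.pi * σ ^ 2 := by positivity
    set K : ℝ := (2 * Real.pi * σ ^ 2) ^ (-(d : ℝ) / 2) with hK
    have hK0 : 0 < K := Real.rpow_pos_of_pos h2pi _
    have hg0 : ∀ v : EuclideanSpace ℝ (Fin d), 0 ≤ gaussDensity d σ v := fun v => by
      unfold gaussDensity; positivity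
    have hgK : ∀ v : EuclideanSpace ℝ (Fin d), gaussDensity d σ v ≤ K := fun v => by
      show (2 * Real.pi * σ ^ 2) ^ (-(d : ℝ) / 2) * Real.exp (-‖v‖ ^ 2 / (2 * σ ^ 2)) ≤ K
      have he : -‖v‖ ^ 2 / (2 * σ ^ 2) ≤ 0 :=
        div_nonpos_of_nonpos_of_nonneg (neg_nonpos.2 (by positivity)) (by positivity)
      calc (2 * Real.pi * σ ^ 2) ^ (-(d : ℝ) / 2) * Real.exp (-‖v‖ ^ 2 / (2 * σ ^ 2))
          ≤ (2 * Real.pi * σ ^ 2) ^ (-(d : ℝ) / 2) * 1 :=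
            mul_le_mul_of_nonneg_left (Real.exp_le_one_iff.mpr he) hK0.le
        _ = K := mul_one _
    have hmap : ∀ (ρ : Measure (EuclideanSpace ℝ (Fin d) × EuclideanSpace ℝ (Fin d)))
        (p : EuclideanSpace ℝ (Fin d) × EuclideanSpace ℝ (Fin d) → EuclideanSpace ℝ (Fin d)),
        Measurable p →
        smoothDensity d σ (ρ.map p) x = ∫ z, gaussDensity d σ (x - p z) ∂ρ := by
      intro ρ p hp
      have hfc : Continuous (fun u : EuclideanSpace ℝ (Fin d) => gaussDensity d σ (x - u)) := by
        exact hgc.comp (continuous_const.sub continuous_id)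
      unfold smoothDensity
      rw [integral_map hp.aemeasurable hfc.aestronglyMeasurable]
    have hn0 : (0 : ℝ) < n := by exact_mod_cast hn1
    have hs0 : 0 < Real.sqrt n := Real.sqrt_pos.2 hn0
    have hsa : Real.sqrt n * (Real.sqrt n)⁻¹ = 1 := mul_inv_cancel₀ hs0.ne'
    have key : ∀ p : EuclideanSpace ℝ (Fin d) × EuclideanSpace ℝ (Fin d) →
        EuclideanSpace ℝ (Fin d), Measurable p →
        (Real.sqrt n * ((∫ z, gaussDensity d σ (x - p z) ∂(π n))
              - ∫ z, gaussDensity d σ (x - p z) ∂π₀)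
          = ∫ z, h z * gaussDensity d σ (x - p z) ∂π₀) ∧
        (∫ z, h z * gaussDensity d σ (x - p z) ∂π₀
          = c * ((∫ z, gaussDensity d σ (x - p z) ∂(μ₀.prod ν₀))
              - ∫ z, gaussDensity d σ (x - p z) ∂(ν₀.prod μ₀))) := by
      intro p hp
      set g : _ → ℝ := fun z => gaussDensity d σ (x - p z) with hg
      have hgm : Measurable g := hgc.measurable.comp (measurable_const.sub hp)
      have hgbd : ∃ Cg : ℝ, ∀ z, ‖g z‖ ≤ Cg :=
        ⟨K, fun z => by rw [Real.norm_eq_abs, abs_of_nonneg (hg0 _)]; exact hgK _⟩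
      have hint_g : ∀ (ρ : Measure (EuclideanSpace ℝ (Fin d) × EuclideanSpace ℝ (Fin d)))
          [IsFiniteMeasure ρ], Integrable g ρ := by
        intro ρ _
        apply Integrable.mono' (integrable_const K) hgm.aestronglyMeasurable
        exact Eventually.of_forall fun z => by
          rw [Real.norm_eq_abs, abs_of_nonneg (hg0 _)]; exact hgK _
      have hint_hg : Integrable (fun z => h z * g z) π₀ :=
        (hinth.bdd_mul hgm.aestronglyMeasurable (Eventually.of_forall hgbd.choose_spec)).congr
          (Eventually.of_forall fun z => mul_comm _ _)
      have hπint : ∫ z, g z ∂(π n)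
          = (∫ z, g z ∂π₀) + (Real.sqrt n)⁻¹ * ∫ z, h z * g z ∂π₀ := by
        rw [(hπ n).1 hcn]
        rw [show (fun z => ENNReal.ofReal (1 + (Real.sqrt n)⁻¹ * h z))
            = fun z => (((1 + (Real.sqrt n)⁻¹ * h z).toNNReal : NNReal) : ℝ≥0∞) from rfl]
        rw [integral_withDensity_eq_integral_smul (f := fun z => (1 + (Real.sqrt n)⁻¹ * h z).toNNReal)
          ((measurable_const.add (hhm.const_mul _)).real_toNNReal) g]
        have hae : ∀ᵐ z ∂π₀, (Real.toNNReal (1 + (Real.sqrt n)⁻¹ * h z)) • g z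
            = g z + (Real.sqrt n)⁻¹ * (h z * g z) := by
          filter_upwards [hcn] with z hz
          rw [NNReal.smul_def, Real.coe_toNNReal _ hz, smul_eq_mul]; ring
        rw [integral_congr_ae hae, integral_add (hint_g π₀) (hint_hg.const_mul _),
          integral_const_mul]
      constructor
      · rw [hπint]
        have e : (∫ z, g z ∂π₀) + (Real.sqrt n)⁻¹ * (∫ z, h z * g z ∂π₀) - ∫ z, g z ∂π₀
            = (Real.sqrt n)⁻¹ * ∫ z, h z * g z ∂π₀ := by ring
        rw [e, ← mul_assoc, hsa, one_mul]
      · have hAe : ∫ z, A z * g z ∂π₀ = ∫ z, g z ∂(μ₀.prod ν₀) := by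
          have := integral_rnDeriv_smul hac₁ (f := g)
          simpa [smul_eq_mul] using this
        have hBe : ∫ z, B z * g z ∂π₀ = ∫ z, g z ∂(ν₀.prod μ₀) := by
          have := integral_rnDeriv_smul hac₂ (f := g)
          simpa [smul_eq_mul] using this
        have hintAg : Integrable (fun z => A z * g z) π₀ :=
          (hintA.bdd_mul hgm.aestronglyMeasurable (Eventually.of_forall hgbd.choose_spec)).congr
            (Eventually.of_forall fun z => mul_comm _ _)
        have hintBg : Integrable (fun z => B z * g z) π₀ :=
          (hintB.bdd_mul hgm.aestronglyMeasurable (Eventually.of_forall hgbd.choose_spec)).congr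
            (Eventually.of_forall fun z => mul_comm _ _)
        have he2 : (fun z => h z * g z) = fun z => c * (A z * g z - B z * g z) := by
          funext z; rw [hdef z]; ring
        rw [he2, integral_const_mul, integral_sub hintAg hintBg, hAe, hBe]
    obtain ⟨k1, k2⟩ := key Prod.fst measurable_fst
    obtain ⟨l1, l2⟩ := key Prod.snd measurable_snd
    have m1 : smoothDensity d σ ((π n).map Prod.fst) x
        = ∫ z, gaussDensity d σ (x - z.1) ∂(π n) := hmap _ _ measurable_fst
    have m2 : smoothDensity d σ μ₀ x = ∫ z, gaussDensity d σ (x - z.1) ∂π₀ := by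
      rw [hμ₀]; exact hmap _ _ measurable_fst
    have m3 : smoothDensity d σ ((π n).map Prod.snd) x
        = ∫ z, gaussDensity d σ (x - z.2) ∂(π n) := hmap _ _ measurable_snd
    have m4 : smoothDensity d σ ν₀ x = ∫ z, gaussDensity d σ (x - z.2) ∂π₀ := by
      rw [hν₀]; exact hmap _ _ measurable_snd
    have m5 : ∫ z, gaussDensity d σ (x - z.1) ∂(μ₀.prod ν₀) = smoothDensity d σ μ₀ x := by
      rw [← hmap (μ₀.prod ν₀) Prod.fst measurable_fst, Measure.map_fst_prod]
      simp [measure_univ]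
    have m6 : ∫ z, gaussDensity d σ (x - z.1) ∂(ν₀.prod μ₀) = smoothDensity d σ ν₀ x := by
      rw [← hmap (ν₀.prod μ₀) Prod.fst measurable_fst, Measure.map_fst_prod]
      simp [measure_univ]
    have m7 : ∫ z, gaussDensity d σ (x - z.2) ∂(μ₀.prod ν₀) = smoothDensity d σ ν₀ x := by
      rw [← hmap (μ₀.prod ν₀) Prod.snd measurable_snd, Measure.map_snd_prod]
      simp [measure_univ]
    have m8 : ∫ z, gaussDensity d σ (x - z.2) ∂(ν₀.prod μ₀) = smoothDensity d σ μ₀ x := by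
      rw [← hmap (ν₀.prod μ₀) Prod.snd measurable_snd, Measure.map_snd_prod]
      simp [measure_univ]
    refine ⟨⟨?_, ?_⟩, ?_, ?_⟩
    · rw [m1, m2]; exact k1
    · rw [k2, m5, m6]
    · rw [m3, m4]; exact l1
    · rw [l2, m7, m8]
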